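/- arXiv:1209.5569 — 16 statements merged into one kernel-verified Lean document; each statement's English description precedes it below -/
import Mathlib

section
/- Let C be a covering of a finite nonempty set U. For all X, Y in the fixed point set of neighborhoods P, both X ∪ Y ∈ P and X ∩ Y ∈ P; consequently (P, ⊆) is a lattice in which X ∨ Y = X ∪ Y and X ∧ Y = X ∩ Y. -/
open Set

variable {U : Type*}

/-- The neighborhood of `x` w.r.t. the covering `C`: the intersection of all
blocks of `C` containing `x`. -/
def nbhd (C : Set (Set U)) (x : U) : Set U := ⋂₀ {K | K ∈ C ∧ x ∈ K}

/-- The sixth-type lower approximation. -/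
def xL (C : Set (Set U)) (X : Set U) : Set U := {x | nbhd C x ⊆ X}

/-- The fixed point set of neighborhoods. -/
def pFix (C : Set (Set U)) : Set (Set U) := {X | xL C X = X}

lemma mem_nbhd_self (C : Set (Set U)) (x : U) : x ∈ nbhd C x := by
  intro K hK; exact hK.2

/-- `P` is closed under binary unions and intersections, and in the
poset `(P, ⊆)` the union is the least upper bound and the intersection is the
greatest lower bound, so `(P, ⊆)` is a lattice with `X ∨ Y = X ∪ Y` and
`X ∧ Y = X ∩ Y`. -/
theorem stmt1 [Fintype U] [Nonempty U] (C : Set (Set U))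
    (hne : ∀ K ∈ C, K.Nonempty) (hcov : ⋃₀ C = Set.univ)
    (X Y : Set U) (hX : X ∈ pFix C) (hY : Y ∈ pFix C) :
    X ∪ Y ∈ pFix C ∧ X ∩ Y ∈ pFix C ∧
    (X ⊆ X ∪ Y ∧ Y ⊆ X ∪ Y ∧ ∀ Z ∈ pFix C, X ⊆ Z → Y ⊆ Z → X ∪ Y ⊆ Z) ∧
    (X ∩ Y ⊆ X ∧ X ∩ Y ⊆ Y ∧ ∀ Z ∈ pFix C, Z ⊆ X → Z ⊆ Y → Z ⊆ X ∩ Y) := by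
  have hXn : ∀ x ∈ X, nbhd C x ⊆ X := fun x hx => by
    have := hX.symm ▸ hx; exact this
  have hYn : ∀ y ∈ Y, nbhd C y ⊆ Y := fun y hy => by
    have := hY.symm ▸ hy; exact this
  refine ⟨?_, ?_, ⟨subset_union_left, subset_union_right,
      fun Z _ hXZ hYZ => union_subset hXZ hYZ⟩,
      ⟨inter_subset_left, inter_subset_right,
      fun Z _ hZX hZY => subset_inter hZX hZY⟩⟩
  · ext x
    constructor
    · intro hx
      exact hx (mem_nbhd_self C x)
    · rintro (hx | hx)
      · exact fun y hy => Or.inl (hXn x hx hy)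
      · exact fun y hy => Or.inr (hYn x hx hy)
  · ext x
    constructor
    · intro hx
      exact hx (mem_nbhd_self C x)
    · rintro ⟨hx1, hx2⟩
      exact fun y hy => ⟨hXn x hx1 hy, hYn x hx2 hy⟩
end

section
/- Let C be a covering of a finite nonempty set U. For every x ∈ U, the neighborhood N(x) belongs to the fixed point set of neighborhoods P, i.e., XL(N(x)) = N(x). -/
open Set

variable {U : Type*}

/-- for every `x ∈ U`, the neighborhood `N(x)` belongs to `P`. -/
theorem stmt2 [Fintype U] [Nonempty U] (C : Set (Set U))
    (hne : ∀ K ∈ C, K.Nonempty) (hcov : ⋃₀ C = Set.univ) (x : U) :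
    nbhd C x ∈ pFix C := by
  have hmem : ∀ y : U, y ∈ nbhd C y := by
    intro y
    have : y ∈ ⋃₀ C := by rw [hcov]; trivial
    intro K hK
    exact hK.2
  ext y
  constructor
  · intro hy
    have : y ∈ nbhd C y := hmem y
    exact hy this
  · intro hy
    intro z hz
    intro K hK
    have hyK : y ∈ K := hy K hK
    exact hz K ⟨hK.1, hyK⟩
end

section
/- Let C be a covering of a finite nonempty set U. For every x ∈ U, N(x) is a join-irreducible element of the lattice (P, ⊆): whenever N(x) = X ∪ Y with X, Y ∈ P, then N(x) = X or N(x) = Y. -/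
open Set

variable {U : Type*}

/-- `N(x)` is a join-irreducible element of the lattice `(P, ⊆)`. -/
theorem stmt3 [Fintype U] [Nonempty U] (C : Set (Set U))
    (hne : ∀ K ∈ C, K.Nonempty) (hcov : ⋃₀ C = Set.univ) (x : U) :
    ∀ X ∈ pFix C, ∀ Y ∈ pFix C, nbhd C x = X ∪ Y → nbhd C x = X ∨ nbhd C x = Y := by
  intro X hX Y hY h
  have hx : x ∈ nbhd C x := fun K hK => hK.2
  rcases h ▸ hx with hxX | hxY
  · left
    apply subset_antisymm
    · have : x ∈ xL C X := by rw [hX]; exact hxX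
      exact this
    · rw [h]; exact subset_union_left
  · right
    apply subset_antisymm
    · have : x ∈ xL C Y := by rw [hY]; exact hxY
      exact this
    · rw [h]; exact subset_union_right
end

section
/- Let C be a covering of a finite nonempty set U. For every family S of subsets with S ⊆ P, both ⋃S ∈ P and ⋂S ∈ P; consequently (P, ⊆) is a complete lattice. -/
open Set

variable {U : Type*}

/-- `P` is closed under arbitrary unions and intersections
(the empty intersection being `U`), hence `(P, ⊆)` is a complete lattice. -/
theorem stmt4 [Fintype U] [Nonempty U] (C : Set (Set U))
    (hne : ∀ K ∈ C, K.Nonempty) (hcov : ⋃₀ C = Set.univ)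
    (S : Set (Set U)) (hS : S ⊆ pFix C) :
    ⋃₀ S ∈ pFix C ∧ ⋂₀ S ∈ pFix C := by
  have hmem : ∀ x : U, x ∈ nbhd C x := by
    intro x
    simp only [nbhd, mem_sInter, mem_setOf_eq]
    rintro K ⟨-, hx⟩
    exact hx
  constructor
  · apply Set.Subset.antisymm
    · intro x hx
      exact hmem x |> hx
    · intro x hx
      rcases hx with ⟨X, hX, hxX⟩
      have h := hS hX
      rw [pFix, mem_setOf_eq] at h
      have : x ∈ xL C X := by rw [h]; exact hxX
      exact fun y hy => ⟨X, hX, this hy⟩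
  · apply Set.Subset.antisymm
    · intro x hx
      exact hmem x |> hx
    · intro x hx
      intro y hy
      rw [mem_sInter]
      intro X hX
      have h := hS hX
      rw [pFix, mem_setOf_eq] at h
      have : x ∈ xL C X := by rw [h]; exact hx X hX
      exact this hy
end

section
/- Let C be a covering of a finite nonempty set U. For every X ∈ P, the set XL(Xᶜ) is the pseudocomplement of X in the lattice (P, ⊆): XL(Xᶜ) ∈ P, X ∩ XL(Xᶜ) = ∅, and for every Y ∈ P with X ∩ Y = ∅ one has Y ⊆ XL(Xᶜ). -/
open Set

variable {U : Type*}

/-- for every `X ∈ P`, `XL(Xᶜ)` is the pseudocomplement of `X` in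
the lattice `(P, ⊆)`. -/
theorem stmt5 [Fintype U] [Nonempty U] (C : Set (Set U))
    (hne : ∀ K ∈ C, K.Nonempty) (hcov : ⋃₀ C = Set.univ)
    (X : Set U) (hX : X ∈ pFix C) :
    xL C Xᶜ ∈ pFix C ∧ X ∩ xL C Xᶜ = ∅ ∧
    ∀ Y ∈ pFix C, X ∩ Y = ∅ → Y ⊆ xL C Xᶜ := by
  have mem_self : ∀ x : U, x ∈ nbhd C x := fun x =>
    Set.mem_sInter.mpr fun K hK => hK.2
  have mono : ∀ x y : U, y ∈ nbhd C x → nbhd C y ⊆ nbhd C x := by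
    intro x y hy z hz
    refine Set.mem_sInter.mpr fun K hK => ?_
    exact Set.mem_sInter.mp hz K ⟨hK.1, Set.mem_sInter.mp hy K hK⟩
  refine ⟨?_, ?_, ?_⟩
  · ext x
    constructor
    · intro hx
      exact hx (mem_self x)
    · intro hx y hy
      exact fun z hz => hx (mono x y hy hz)
  · ext x
    simp only [Set.mem_inter_iff, Set.mem_empty_iff_false, iff_false]
    rintro ⟨hxX, hxL⟩
    exact hxL (mem_self x) hxX
  · intro Y hY hXY y hy z hz hzX
    have hy' : nbhd C y ⊆ Y := by rw [← hY] at hy; exact hy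
    have : z ∈ X ∩ Y := ⟨hzX, hy' hz⟩
    rw [hXY] at this
    exact this
end

section
/- Let C be a covering of a finite nonempty set U. For every X ∈ P, the set ⋃_{x ∈ Xᶜ} N(x) is the dual pseudocomplement of X in the lattice (P, ⊆): ⋃_{x ∈ Xᶜ} N(x) ∈ P, X ∪ ⋃_{x ∈ Xᶜ} N(x) = U, and for every Y ∈ P with X ∪ Y = U one has ⋃_{x ∈ Xᶜ} N(x) ⊆ Y. -/
open Set

variable {U : Type*}

/-- for every `X ∈ P`, `⋃_{x ∈ Xᶜ} N(x)` is the dual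
pseudocomplement of `X` in the lattice `(P, ⊆)`. -/
theorem stmt6 [Fintype U] [Nonempty U] (C : Set (Set U))
    (hne : ∀ K ∈ C, K.Nonempty) (hcov : ⋃₀ C = Set.univ)
    (X : Set U) (hX : X ∈ pFix C) :
    (⋃ x ∈ Xᶜ, nbhd C x) ∈ pFix C ∧ X ∪ (⋃ x ∈ Xᶜ, nbhd C x) = Set.univ ∧
    ∀ Y ∈ pFix C, X ∪ Y = Set.univ → (⋃ x ∈ Xᶜ, nbhd C x) ⊆ Y := by
  have hmem : ∀ x : U, x ∈ nbhd C x := by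
    intro x
    rw [nbhd, Set.mem_sInter]
    intro K hK; exact hK.2
  have htrans : ∀ x y : U, y ∈ nbhd C x → nbhd C y ⊆ nbhd C x := by
    intro x y hy z hz
    rw [nbhd, Set.mem_sInter] at hy hz ⊢
    intro K hK
    exact hz K ⟨hK.1, hy K hK⟩
  refine ⟨?_, ?_, ?_⟩
  · apply Set.eq_of_subset_of_subset
    · intro z hz
      exact hz (hmem z)
    · intro z hz
      rcases Set.mem_iUnion₂.1 hz with ⟨x, hx, hzx⟩
      intro w hw
      exact Set.mem_iUnion₂.2 ⟨x, hx, htrans x z hzx hw⟩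
  · apply Set.eq_univ_of_forall
    intro x
    by_cases hx : x ∈ X
    · exact Or.inl hx
    · exact Or.inr (Set.mem_iUnion₂.2 ⟨x, hx, hmem x⟩)
  · intro Y hY hXY z hz
    rcases Set.mem_iUnion₂.1 hz with ⟨x, hx, hzx⟩
    have hxY : x ∈ Y := by
      have : x ∈ X ∪ Y := hXY ▸ Set.mem_univ x
      exact this.resolve_left hx
    have hx' : x ∈ xL C Y := by
      have hY' : xL C Y = Y := hY
      rw [hY']; exact hxY
    exact hx' hzx
end

section
/- Let C be a covering of a finite nonempty set U. If the family {N(x) | x ∈ U} of neighborhoods is a partition of U, then for every X ∈ P the complement Xᶜ = U \ X also belongs to P; consequently (P, ⊆) is a Boolean lattice (a complemented distributive bounded lattice with meet ∩, join ∪, least element ∅ and greatest element U). -/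
open Set

variable {U : Type*}

lemma mem_pFix_iff (C : Set (Set U)) (X : Set U) :
    X ∈ pFix C ↔ ∀ x ∈ X, nbhd C x ⊆ X := by
  constructor
  · intro h x hx
    rw [pFix, Set.mem_setOf_eq] at h
    rw [← h] at hx
    exact hx
  · intro h
    apply Set.Subset.antisymm
    · intro x hx; exact hx (mem_nbhd_self C x)
    · intro x hx; exact h x hx

/-- if the neighborhoods form a partition of `U`, then `P` is
closed under complements; together with the closure of `P` under `∪` and `∩`
and `∅, U ∈ P`, this makes `(P, ⊆)` a Boolean lattice. -/
theorem stmt7 [Fintype U] [Nonempty U] (C : Set (Set U))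
    (hne : ∀ K ∈ C, K.Nonempty) (hcov : ⋃₀ C = Set.univ)
    (hpart : ∀ x y : U, nbhd C x = nbhd C y ∨ nbhd C x ∩ nbhd C y = ∅) :
    (∀ X ∈ pFix C, Xᶜ ∈ pFix C) ∧
    (∅ : Set U) ∈ pFix C ∧ (Set.univ : Set U) ∈ pFix C ∧
    ∀ X ∈ pFix C, ∀ Y ∈ pFix C, X ∪ Y ∈ pFix C ∧ X ∩ Y ∈ pFix C := by
  refine ⟨?_, ?_, ?_, ?_⟩
  · intro X hX
    rw [mem_pFix_iff] at hX ⊢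
    intro x hx y hy hyX
    rcases hpart x y with h | h
    · exact hx (hX y hyX (h ▸ mem_nbhd_self C x))
    · exact absurd (Set.mem_inter hy (mem_nbhd_self C y))
        (by rw [h]; exact notMem_empty y)
  · rw [mem_pFix_iff]; intro x hx; exact absurd hx (notMem_empty x)
  · rw [mem_pFix_iff]; intro x _ y _; trivial
  · intro X hX Y hY
    rw [mem_pFix_iff] at hX hY
    constructor
    · rw [mem_pFix_iff]
      rintro x (hx | hx)
      · exact (hX x hx).trans subset_union_left
      · exact (hY x hx).trans subset_union_right
    · rw [mem_pFix_iff]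
      intro x hx
      exact subset_inter (hX x hx.1) (hY x hx.2)
end

section
/- Let C be a covering of a finite nonempty set U such that the family {N(x) | x ∈ U} of neighborhoods is a partition of U. Then for every X ∈ P one has XL(Xᶜ) = Xᶜ = ⋃_{x ∈ Xᶜ} N(x); consequently, writing X* = XL(Xᶜ), X** = XL((X*)ᶜ), X⁺ = ⋃_{x ∈ Xᶜ} N(x) and X⁺⁺ = ⋃_{x ∈ (X⁺)ᶜ} N(x), the Stone identities X* ∪ X** = U and X⁺ ∩ X⁺⁺ = ∅ hold, so (P, ⊆) is a double Stone algebra. -/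
open Set

variable {U : Type*}

/-- `⋃_{x ∈ Xᶜ} N(x)`, the dual pseudocomplement operation on `P`. -/
def nUc (C : Set (Set U)) (X : Set U) : Set U := ⋃ x ∈ Xᶜ, nbhd C x


lemma nbhd_eq_of_mem {C : Set (Set U)}
    (hpart : ∀ x y : U, nbhd C x = nbhd C y ∨ nbhd C x ∩ nbhd C y = ∅)
    {x y : U} (hy : y ∈ nbhd C x) : nbhd C y = nbhd C x := by
  rcases hpart y x with h | h
  · exact h
  · exfalso
    have : y ∈ nbhd C y ∩ nbhd C x := ⟨mem_nbhd_self C y, hy⟩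
    rw [h] at this
    exact this

lemma xL_compl_eq {C : Set (Set U)}
    (hpart : ∀ x y : U, nbhd C x = nbhd C y ∨ nbhd C x ∩ nbhd C y = ∅)
    {X : Set U} (hX : X ∈ pFix C) : xL C Xᶜ = Xᶜ := by
  ext x
  constructor
  · intro hx
    exact hx (mem_nbhd_self C x)
  · intro hx y hy
    intro hyX
    have hsub : nbhd C y ⊆ X := by
      have := hX ▸ hyX
      exact this
    have := nbhd_eq_of_mem hpart hy
    exact hx (hsub (this ▸ mem_nbhd_self C x))

lemma nUc_eq_compl {C : Set (Set U)}
    (hpart : ∀ x y : U, nbhd C x = nbhd C y ∨ nbhd C x ∩ nbhd C y = ∅)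
    {X : Set U} (hX : X ∈ pFix C) : nUc C X = Xᶜ := by
  ext y
  simp only [nUc, mem_iUnion]
  constructor
  · rintro ⟨x, hx, hy⟩
    intro hyX
    have hsub : nbhd C y ⊆ X := by rw [← hX] at hyX; exact hyX
    have := nbhd_eq_of_mem hpart hy
    exact hx (hsub (this ▸ mem_nbhd_self C x))
  · intro hy
    exact ⟨y, hy, mem_nbhd_self C y⟩

/-- if the neighborhoods form a partition of `U`, then for every
`X ∈ P` one has `XL(Xᶜ) = Xᶜ = ⋃_{x ∈ Xᶜ} N(x)`, and the Stone identities
`X* ∪ X** = U` and `X⁺ ∩ X⁺⁺ = ∅` hold, so `(P, ⊆)` is a double Stone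
algebra. -/
theorem stmt8 [Fintype U] [Nonempty U] (C : Set (Set U))
    (hne : ∀ K ∈ C, K.Nonempty) (hcov : ⋃₀ C = Set.univ)
    (hpart : ∀ x y : U, nbhd C x = nbhd C y ∨ nbhd C x ∩ nbhd C y = ∅)
    (X : Set U) (hX : X ∈ pFix C) :
    xL C Xᶜ = Xᶜ ∧ nUc C X = Xᶜ ∧
    xL C Xᶜ ∪ xL C (xL C Xᶜ)ᶜ = Set.univ ∧
    nUc C X ∩ nUc C (nUc C X) = ∅ := by
  have h1 : xL C Xᶜ = Xᶜ := xL_compl_eq hpart hX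
  have h2 : nUc C X = Xᶜ := nUc_eq_compl hpart hX
  have hXc : Xᶜ ∈ pFix C := h1
  have h3 : xL C (Xᶜ)ᶜ = (Xᶜ)ᶜ := xL_compl_eq hpart hXc
  have h4 : nUc C Xᶜ = (Xᶜ)ᶜ := nUc_eq_compl hpart hXc
  refine ⟨h1, h2, ?_, ?_⟩
  · rw [h1, h3, compl_compl, compl_union_self]
  · rw [h2, h4, compl_compl, compl_inter_self]
end

section
/- Let C be a covering of a finite nonempty set U. For all X, Y in the fixed point set of covering F, both X ∪ Y ∈ F and FL(X ∩ Y) ∈ F; consequently (F, ⊆) is a lattice in which X ∨ Y = X ∪ Y and X ∧ Y = FL(X ∩ Y). -/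
open Set

variable {U : Type*}

/-- The first-type lower approximation w.r.t. the covering `C`. -/
def fL (C : Set (Set U)) (X : Set U) : Set U := ⋃₀ {K | K ∈ C ∧ K ⊆ X}

/-- The fixed point set of covering. -/
def fFix (C : Set (Set U)) : Set (Set U) := {X | fL C X = X}

/-- `K` is reducible in `C` if it is a union of some sets in `C \ {K}`. -/
def covReducible (C : Set (Set U)) (K : Set U) : Prop := ∃ S ⊆ C \ {K}, K = ⋃₀ S

/-- The minimal description of `x`. -/
def md (C : Set (Set U)) (x : U) : Set (Set U) :=
  {K | K ∈ C ∧ x ∈ K ∧ ∀ S ∈ C, x ∈ S → S ⊆ K → S = K}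

/-- `C` is unary if `|md x| = 1` for every `x`. -/
def isUnary (C : Set (Set U)) : Prop := ∀ x : U, ∃! K : Set U, K ∈ md C x

/-- The join-irreducible elements of the lattice `(fFix C, ⊆)`. -/
def jIrr (C : Set (Set U)) : Set (Set U) :=
  {A | A ∈ fFix C ∧ ∀ X ∈ fFix C, ∀ Y ∈ fFix C, A = X ∪ Y → A = X ∨ A = Y}

lemma fL_subset (C : Set (Set U)) (X : Set U) : fL C X ⊆ X := by
  intro x hx
  obtain ⟨K, ⟨_, hK⟩, hxK⟩ := hx
  exact hK hxK

lemma fL_mono (C : Set (Set U)) {X Y : Set U} (h : X ⊆ Y) : fL C X ⊆ fL C Y := by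
  intro x hx
  obtain ⟨K, ⟨hKC, hK⟩, hxK⟩ := hx
  exact ⟨K, ⟨hKC, hK.trans h⟩, hxK⟩

lemma fL_idem (C : Set (Set U)) (X : Set U) : fL C (fL C X) = fL C X := by
  apply subset_antisymm (fL_subset _ _)
  intro x hx
  obtain ⟨K, ⟨hKC, hK⟩, hxK⟩ := hx
  exact ⟨K, ⟨hKC, fun y hy => ⟨K, ⟨hKC, hK⟩, hy⟩⟩, hxK⟩

/-- `F` is closed under `X ∪ Y` and `FL(X ∩ Y)`, and in the poset
`(F, ⊆)` the union is the least upper bound while `FL(X ∩ Y)` is the greatest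
lower bound, so `(F, ⊆)` is a lattice with `X ∨ Y = X ∪ Y` and
`X ∧ Y = FL(X ∩ Y)`. -/
theorem stmt10 [Fintype U] [Nonempty U] (C : Set (Set U))
    (hne : ∀ K ∈ C, K.Nonempty) (hcov : ⋃₀ C = Set.univ)
    (X Y : Set U) (hX : X ∈ fFix C) (hY : Y ∈ fFix C) :
    X ∪ Y ∈ fFix C ∧ fL C (X ∩ Y) ∈ fFix C ∧
    (X ⊆ X ∪ Y ∧ Y ⊆ X ∪ Y ∧ ∀ Z ∈ fFix C, X ⊆ Z → Y ⊆ Z → X ∪ Y ⊆ Z) ∧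
    (fL C (X ∩ Y) ⊆ X ∧ fL C (X ∩ Y) ⊆ Y ∧
      ∀ Z ∈ fFix C, Z ⊆ X → Z ⊆ Y → Z ⊆ fL C (X ∩ Y)) := by
  have hXf : fL C X = X := hX
  have hYf : fL C Y = Y := hY
  refine ⟨?_, fL_idem C _, ⟨subset_union_left, subset_union_right,
    fun Z hZ h1 h2 => union_subset h1 h2⟩,
    (fL_subset C _).trans inter_subset_left,
    (fL_subset C _).trans inter_subset_right,
    fun Z hZ h1 h2 => ?_⟩
  · apply subset_antisymm (fL_subset _ _)
    intro x hx
    rcases hx with hx | hx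
    · rw [← hXf] at hx; exact fL_mono C subset_union_left hx
    · rw [← hYf] at hx; exact fL_mono C subset_union_right hx
  · have : fL C Z ⊆ fL C (X ∩ Y) := fL_mono C (subset_inter h1 h2)
    rwa [hZ] at this
end

section
/- Let C be a covering of a finite nonempty set U and let K ∈ C be irreducible in C. Then K is a join-irreducible element of the lattice (F, ⊆): K ∈ F, and whenever K = X ∪ Y with X, Y ∈ F, then K = X or K = Y. -/
open Set

variable {U : Type*}

/-- every irreducible element `K` of `C` is a join-irreducible
element of the lattice `(F, ⊆)`. -/
theorem stmt11 [Fintype U] [Nonempty U] (C : Set (Set U))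
    (hne : ∀ K ∈ C, K.Nonempty) (hcov : ⋃₀ C = Set.univ)
    (K : Set U) (hK : K ∈ C) (hirr : ¬ covReducible C K) :
    K ∈ fFix C ∧
    ∀ X ∈ fFix C, ∀ Y ∈ fFix C, K = X ∪ Y → K = X ∨ K = Y := by
  constructor
  · apply subset_antisymm
    · exact sUnion_subset fun A hA => hA.2
    · exact subset_sUnion_of_mem ⟨hK, subset_rfl⟩
  · intro X hX Y hY hXY
    by_contra h
    push_neg at h
    obtain ⟨hKX, hKY⟩ := h
    apply hirr
    refine ⟨{A | A ∈ C ∧ A ⊆ X} ∪ {A | A ∈ C ∧ A ⊆ Y}, ?_, ?_⟩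
    · rintro A (⟨hAC, hAX⟩ | ⟨hAC, hAY⟩)
      · refine ⟨hAC, fun hA => ?_⟩
        simp only [mem_singleton_iff] at hA
        subst hA
        have hXA : X ⊆ A := by rw [hXY]; exact subset_union_left
        exact hKX (subset_antisymm hAX hXA)
      · refine ⟨hAC, fun hA => ?_⟩
        simp only [mem_singleton_iff] at hA
        subst hA
        have hYA : Y ⊆ A := by rw [hXY]; exact subset_union_right
        exact hKY (subset_antisymm hAY hYA)
    · rw [sUnion_union]
      have hfx : fL C X ∪ fL C Y = X ∪ Y := by rw [hX, hY]
      rw [hXY]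
      exact hfx.symm
end

section
/- Let C be a covering of a finite nonempty set U and let K ∈ C be reducible in C. Then K is a join-reducible element of the lattice (F, ⊆): K ∈ F and there exist X, Y ∈ F with K = X ∪ Y, X ≠ K and Y ≠ K. -/
open Set

variable {U : Type*}

lemma sUnion_mem_fFix (C : Set (Set U)) (S : Set (Set U)) (hS : S ⊆ C) :
    ⋃₀ S ∈ fFix C := by
  apply subset_antisymm
  · intro x hx
    obtain ⟨T, hT, hxT⟩ := hx
    exact hT.2 hxT
  · intro x hx
    obtain ⟨T, hT, hxT⟩ := hx
    exact ⟨T, ⟨hS hT, subset_sUnion_of_mem hT⟩, hxT⟩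

/-- every reducible element `K` of `C` is a join-reducible
element of the lattice `(F, ⊆)`. -/
theorem stmt12 [Fintype U] [Nonempty U] (C : Set (Set U))
    (hne : ∀ K ∈ C, K.Nonempty) (hcov : ⋃₀ C = Set.univ)
    (K : Set U) (hK : K ∈ C) (hred : covReducible C K) :
    K ∈ fFix C ∧
    ∃ X ∈ fFix C, ∃ Y ∈ fFix C, K = X ∪ Y ∧ X ≠ K ∧ Y ≠ K := by
  classical
  have hKfix : K ∈ fFix C := by
    have := sUnion_mem_fFix C {K} (by simpa using hK)
    simpa using this
  refine ⟨hKfix, ?_⟩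
  obtain ⟨S₀, hS₀, hKeq₀⟩ := hred
  set P : ℕ → Prop := fun n => ∃ S, S ⊆ C \ {K} ∧ ⋃₀ S = K ∧ S.ncard = n with hP
  have hex : ∃ n, P n := ⟨S₀.ncard, S₀, hS₀, hKeq₀.symm, rfl⟩
  obtain ⟨S, hS, hKeq, hcard⟩ := Nat.find_spec hex
  have hmin : ∀ m < Nat.find hex, ¬ P m := fun m hm => Nat.find_min hex hm
  have hSfin : S.Finite := Set.toFinite S
  -- S is nonempty since K is nonempty
  obtain ⟨a, ha⟩ := hne K hK
  have haS : a ∈ ⋃₀ S := hKeq ▸ ha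
  obtain ⟨T₀, hT₀S, _⟩ := haS
  refine ⟨T₀, ?_, ⋃₀ (S \ {T₀}), ?_, ?_, ?_, ?_⟩
  · have := sUnion_mem_fFix C {T₀} (by simpa using (hS hT₀S).1)
    simpa using this
  · exact sUnion_mem_fFix C _ (fun T hT => (hS hT.1).1)
  · apply subset_antisymm
    · intro x hx
      obtain ⟨T, hTS, hxT⟩ := hKeq ▸ hx
      by_cases h : T = T₀
      · exact Or.inl (h ▸ hxT)
      · exact Or.inr ⟨T, ⟨hTS, h⟩, hxT⟩
    · rintro x (hx | ⟨T, hTS, hxT⟩)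
      · exact hKeq ▸ subset_sUnion_of_mem hT₀S hx
      · exact hKeq ▸ subset_sUnion_of_mem hTS.1 hxT
  · exact (hS hT₀S).2
  · intro hYK
    have hlt : (S \ {T₀}).ncard < Nat.find hex := by
      rw [← hcard]
      exact Set.ncard_diff_singleton_lt_of_mem hT₀S hSfin
    exact hmin _ hlt ⟨S \ {T₀}, fun T hT => hS hT.1, hYK, rfl⟩
end

section
/- Let C be a covering of a finite nonempty set U. For every family S of subsets with S ⊆ F, both ⋃S ∈ F and FL(⋂S) ∈ F; consequently (F, ⊆) is a complete lattice. -/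
open Set

variable {U : Type*}

/-- for every `S ⊆ F`, both `⋃S ∈ F` and `FL(⋂S) ∈ F`
(the empty intersection being `U`), hence `(F, ⊆)` is a complete lattice. -/
theorem stmt13 [Fintype U] [Nonempty U] (C : Set (Set U))
    (hne : ∀ K ∈ C, K.Nonempty) (hcov : ⋃₀ C = Set.univ)
    (S : Set (Set U)) (hS : S ⊆ fFix C) :
    ⋃₀ S ∈ fFix C ∧ fL C (⋂₀ S) ∈ fFix C := by
  have hsub : ∀ X : Set U, fL C X ⊆ X := by
    intro X x hx
    obtain ⟨K, ⟨_, hKX⟩, hxK⟩ := hx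
    exact hKX hxK
  have hmono : ∀ X Y : Set U, X ⊆ Y → fL C X ⊆ fL C Y := by
    intro X Y hXY x ⟨K, ⟨hKC, hKX⟩, hxK⟩
    exact ⟨K, ⟨hKC, hKX.trans hXY⟩, hxK⟩
  have hidem : ∀ X : Set U, fL C (fL C X) = fL C X := by
    intro X
    refine subset_antisymm (hsub _) ?_
    rintro x ⟨K, ⟨hKC, hKX⟩, hxK⟩
    exact ⟨K, ⟨hKC, fun y hy => ⟨K, ⟨hKC, hKX⟩, hy⟩⟩, hxK⟩
  constructor
  · refine subset_antisymm (hsub _) ?_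
    rintro x ⟨X, hXS, hxX⟩
    have : x ∈ fL C X := by rw [hS hXS]; exact hxX
    exact hmono X (⋃₀ S) (subset_sUnion_of_mem hXS) this
  · exact hidem _
end

section
/- Let C be a unary covering of a finite nonempty set U. Then for all X, Y, Z ∈ F one has FL(X ∩ (Y ∪ Z)) = FL(X ∩ Y) ∪ FL(X ∩ Z); consequently the lattice (F, ⊆), with join X ∨ Y = X ∪ Y and meet X ∧ Y = FL(X ∩ Y), is distributive. -/
open Set

variable {U : Type*}

/-- If `C` is unary, the unique minimal description of `x` is contained in
every member of `C` containing `x`. -/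
lemma md_subset_of_mem [Fintype U] {C : Set (Set U)} (hunary : isUnary C)
    {x : U} {M : Set U} (hM : M ∈ md C x) {K : Set U} (hK : K ∈ C) (hxK : x ∈ K) :
    M ⊆ K := by
  obtain ⟨M', hM', huniq⟩ := hunary x
  have hMeq : M = M' := huniq M hM
  subst hMeq
  -- find a minimal element of C containing x inside K
  set s : Set (Set U) := {S | S ∈ C ∧ x ∈ S ∧ S ⊆ K} with hs
  have hsne : s.Nonempty := ⟨K, hK, hxK, subset_rfl⟩
  have hsfin : s.Finite := Set.toFinite s
  obtain ⟨m, hm, hmin⟩ := hsfin.exists_minimalFor id s hsne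
  obtain ⟨hmC, hxm, hmK⟩ := hm
  have hmmd : m ∈ md C x := by
    refine ⟨hmC, hxm, fun S hS hxS hSm => ?_⟩
    exact Set.Subset.antisymm hSm (hmin (j := S) ⟨hS, hxS, hSm.trans hmK⟩ hSm)
  have : m = M := huniq m hmmd
  exact this ▸ hmK

/-- if `C` is unary then
`FL(X ∩ (Y ∪ Z)) = FL(X ∩ Y) ∪ FL(X ∩ Z)` for all `X, Y, Z ∈ F`, i.e. the
lattice `(F, ⊆)` (with join `∪` and meet `(X, Y) ↦ FL(X ∩ Y)`) is
distributive. -/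
theorem stmt14 [Fintype U] [Nonempty U] (C : Set (Set U))
    (hne : ∀ K ∈ C, K.Nonempty) (hcov : ⋃₀ C = Set.univ)
    (hunary : isUnary C) :
    ∀ X ∈ fFix C, ∀ Y ∈ fFix C, ∀ Z ∈ fFix C,
      fL C (X ∩ (Y ∪ Z)) = fL C (X ∩ Y) ∪ fL C (X ∩ Z) := by
  intro X hX Y hY Z hZ
  apply Set.Subset.antisymm
  · intro x hx
    obtain ⟨K, ⟨hKC, hKsub⟩, hxK⟩ := hx
    have hxX : x ∈ X := (hKsub hxK).1
    have hxYZ : (x ∈ Y) ∨ (x ∈ Z) := (hKsub hxK).2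
    obtain ⟨M, hMmd, _⟩ := hunary x
    have hMC := hMmd.1
    have hxM := hMmd.2.1
    -- M ⊆ X since X is a fixed point
    have hMsubX : M ⊆ X := by
      have : x ∈ fL C X := (show fL C X = X from hX).symm ▸ hxX
      obtain ⟨K', ⟨hK'C, hK'sub⟩, hxK'⟩ := this
      exact (md_subset_of_mem hunary hMmd hK'C hxK').trans hK'sub
    rcases hxYZ with hxY | hxY
    · left
      have : x ∈ fL C Y := (show fL C Y = Y from hY).symm ▸ hxY
      obtain ⟨K', ⟨hK'C, hK'sub⟩, hxK'⟩ := this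
      have hMsubY : M ⊆ Y := (md_subset_of_mem hunary hMmd hK'C hxK').trans hK'sub
      exact ⟨M, ⟨hMC, Set.subset_inter hMsubX hMsubY⟩, hxM⟩
    · right
      have : x ∈ fL C Z := (show fL C Z = Z from hZ).symm ▸ hxY
      obtain ⟨K', ⟨hK'C, hK'sub⟩, hxK'⟩ := this
      have hMsubZ : M ⊆ Z := (md_subset_of_mem hunary hMmd hK'C hxK').trans hK'sub
      exact ⟨M, ⟨hMC, Set.subset_inter hMsubX hMsubZ⟩, hxM⟩
  · rintro x (⟨K, ⟨hKC, hKsub⟩, hxK⟩ | ⟨K, ⟨hKC, hKsub⟩, hxK⟩)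
    · exact ⟨K, ⟨hKC, hKsub.trans (Set.inter_subset_inter_right X Set.subset_union_left)⟩, hxK⟩
    · exact ⟨K, ⟨hKC, hKsub.trans (Set.inter_subset_inter_right X Set.subset_union_right)⟩, hxK⟩
end

section
/- Let C be a unary covering of a finite nonempty set U. Then for all X, Y ∈ F, the intersection X ∩ Y also belongs to F, i.e., FL(X ∩ Y) = X ∩ Y. -/
open Set

variable {U : Type*}

lemma exists_md_subset [Fintype U] (C : Set (Set U)) (x : U) :
    ∀ n (K : Set U), K.ncard = n → K ∈ C → x ∈ K → ∃ M ∈ md C x, M ⊆ K := by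
  intro n
  induction n using Nat.strong_induction_on with
  | _ n ih =>
    intro K hcard hKC hxK
    by_cases h : ∀ S ∈ C, x ∈ S → S ⊆ K → S = K
    · exact ⟨K, ⟨hKC, hxK, h⟩, subset_rfl⟩
    · push_neg at h
      obtain ⟨S, hSC, hxS, hSK, hne⟩ := h
      have hss : S ⊂ K := ⟨hSK, fun h' => hne (subset_antisymm hSK h')⟩
      have : S.ncard < n := hcard ▸ Set.ncard_lt_ncard hss (Set.toFinite K)
      obtain ⟨M, hM, hMS⟩ := ih _ this S rfl hSC hxS
      exact ⟨M, hM, hMS.trans hSK⟩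

/-- if `C` is unary then `F` is closed under binary
intersections: `FL(X ∩ Y) = X ∩ Y` for all `X, Y ∈ F`. -/
theorem stmt15 [Fintype U] [Nonempty U] (C : Set (Set U))
    (hne : ∀ K ∈ C, K.Nonempty) (hcov : ⋃₀ C = Set.univ)
    (hunary : isUnary C) :
    ∀ X ∈ fFix C, ∀ Y ∈ fFix C, fL C (X ∩ Y) = X ∩ Y := by
  intro X hX Y hY
  apply subset_antisymm
  · intro z hz
    obtain ⟨K, ⟨hKC, hKsub⟩, hzK⟩ := hz
    exact hKsub hzK
  · intro z hz
    have hzX : z ∈ X := hz.1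
    have hzY : z ∈ Y := hz.2
    rw [← hX] at hzX
    rw [← hY] at hzY
    obtain ⟨K, ⟨hKC, hKX⟩, hzK⟩ := hzX
    obtain ⟨K', ⟨hK'C, hK'Y⟩, hzK'⟩ := hzY
    obtain ⟨M, hM, hMK⟩ := exists_md_subset C z K.ncard K rfl hKC hzK
    obtain ⟨M', hM', hM'K'⟩ := exists_md_subset C z K'.ncard K' rfl hK'C hzK'
    obtain ⟨N, -, huniq⟩ := hunary z
    have e1 := huniq M hM
    have e2 := huniq M' hM'
    subst e1
    exact ⟨M', ⟨hM'.1, fun a ha => ⟨hKX ((e2 ▸ hMK) ha), hK'Y (hM'K' ha)⟩⟩, hM'.2.1⟩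
end

section
/- Let C be a unary covering of a finite nonempty set U. For every X ∈ F, the set D = ⋃{K ∈ J(F) | K ∩ Xᶜ ≠ ∅} (the union of all join-irreducible elements of (F, ⊆) that contain at least one point of Xᶜ) is the dual pseudocomplement of X in the lattice (F, ⊆): D ∈ F, X ∪ D = U, and for every Y ∈ F with X ∪ Y = U one has D ⊆ Y. -/
open Set

variable {U : Type*}

/-- if `C` is unary then, for every `X ∈ F`, the union
`D = ⋃{K ∈ J(F) | K ∩ Xᶜ ≠ ∅}` of all join-irreducible elements of `(F, ⊆)`
meeting `Xᶜ` is the dual pseudocomplement of `X` in the lattice `(F, ⊆)`. -/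
theorem stmt17 [Fintype U] [Nonempty U] (C : Set (Set U))
    (hne : ∀ K ∈ C, K.Nonempty) (hcov : ⋃₀ C = Set.univ)
    (hunary : isUnary C) (X : Set U) (hX : X ∈ fFix C) :
    (⋃₀ {K | K ∈ jIrr C ∧ (K ∩ Xᶜ).Nonempty}) ∈ fFix C ∧
    X ∪ (⋃₀ {K | K ∈ jIrr C ∧ (K ∩ Xᶜ).Nonempty}) = Set.univ ∧
    ∀ Y ∈ fFix C, X ∪ Y = Set.univ →
      (⋃₀ {K | K ∈ jIrr C ∧ (K ∩ Xᶜ).Nonempty}) ⊆ Y := by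

  classical
  choose N hN using fun x : U => (hunary x).exists
  have hNC : ∀ x, N x ∈ C := fun x => (hN x).1
  have hxN : ∀ x, x ∈ N x := fun x => (hN x).2.1
  -- minimality of N x among members of C containing x
  have hNmin : ∀ x, ∀ S ∈ C, x ∈ S → N x ⊆ S := by
    intro x S hS hxS
    obtain ⟨m, ⟨hmC, hxm, hmS⟩, hmin⟩ :=
      WellFounded.has_min (wellFounded_lt (α := Set U))
        {T | T ∈ C ∧ x ∈ T ∧ T ⊆ S} ⟨S, hS, hxS, subset_rfl⟩
    have hmd : m ∈ md C x := by
      refine ⟨hmC, hxm, fun T hT hxT hTm => ?_⟩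
      by_contra hne'
      exact hmin T ⟨hT, hxT, hTm.trans hmS⟩ (lt_of_le_of_ne hTm hne')
    have hEq := (hunary x).unique (hN x) hmd
    rw [hEq]; exact hmS
  have hfLsub : ∀ Z : Set U, fL C Z ⊆ Z := by
    intro Z t ht
    obtain ⟨K, ⟨hKC, hKZ⟩, htK⟩ := ht
    exact hKZ htK
  have hmemFix : ∀ Z : Set U, (∀ z ∈ Z, ∃ K ∈ C, z ∈ K ∧ K ⊆ Z) → Z ∈ fFix C := by
    intro Z h
    apply subset_antisymm (hfLsub Z)
    intro z hz
    obtain ⟨K, hKC, hzK, hKZ⟩ := h z hz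
    exact ⟨K, ⟨hKC, hKZ⟩, hzK⟩
  have hFixmem : ∀ Z ∈ fFix C, ∀ z ∈ Z, ∃ K ∈ C, z ∈ K ∧ K ⊆ Z := by
    intro Z hZ z hz
    have hZ' : fL C Z = Z := hZ
    rw [← hZ'] at hz
    obtain ⟨K, ⟨hKC, hKZ⟩, hzK⟩ := hz
    exact ⟨K, hKC, hzK, hKZ⟩
  have hNsub : ∀ Z ∈ fFix C, ∀ z ∈ Z, N z ⊆ Z := by
    intro Z hZ z hz
    obtain ⟨K, hKC, hzK, hKZ⟩ := hFixmem Z hZ z hz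
    exact (hNmin z K hKC hzK).trans hKZ
  have hCfix : ∀ K ∈ C, K ∈ fFix C := fun K hK =>
    hmemFix K (fun z hz => ⟨K, hK, hz, subset_rfl⟩)
  have hNfix : ∀ x, N x ∈ fFix C := fun x => hCfix _ (hNC x)
  have hUnionFix : ∀ S : Set (Set U), (∀ A ∈ S, A ∈ fFix C) → ⋃₀ S ∈ fFix C := by
    intro S hS
    apply hmemFix
    intro z hz
    obtain ⟨A, hA, hzA⟩ := hz
    obtain ⟨K, hKC, hzK, hKA⟩ := hFixmem A (hS A hA) z hzA
    exact ⟨K, hKC, hzK, hKA.trans (subset_sUnion_of_mem hA)⟩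
  have hNirr : ∀ x, N x ∈ jIrr C := by
    intro x
    refine ⟨hNfix x, fun A hA B hB hEq => ?_⟩
    have hx : x ∈ A ∪ B := hEq ▸ hxN x
    rcases hx with h | h
    · left
      apply subset_antisymm (hNsub A hA x h)
      rw [hEq]; exact subset_union_left
    · right
      apply subset_antisymm (hNsub B hB x h)
      rw [hEq]; exact subset_union_right
  refine ⟨hUnionFix _ (fun A hA => hA.1.1), ?_, ?_⟩
  · apply subset_antisymm (subset_univ _)
    intro x _
    by_cases hx : x ∈ X
    · exact Or.inl hx
    · exact Or.inr ⟨N x, ⟨hNirr x, x, hxN x, hx⟩, hxN x⟩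
  · intro Y hY hXY t ht
    obtain ⟨K, ⟨hKirr, z, hzK, hzX⟩, htK⟩ := ht
    suffices hKY : K ⊆ Y from hKY htK
    set A : Set U := ⋃₀ {T | ∃ x ∈ K ∩ X, T = N x} with hAdef
    set B : Set U := ⋃₀ {T | ∃ x ∈ K ∩ Y, T = N x} with hBdef
    have hAfix : A ∈ fFix C := hUnionFix _ (by rintro T ⟨x, _, rfl⟩; exact hNfix x)
    have hBfix : B ∈ fFix C := hUnionFix _ (by rintro T ⟨x, _, rfl⟩; exact hNfix x)
    have hKAB : K = A ∪ B := by
      apply subset_antisymm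
      · intro w hw
        have hw2 : w ∈ X ∪ Y := hXY ▸ mem_univ w
        rcases hw2 with h | h
        · exact Or.inl ⟨N w, ⟨w, ⟨hw, h⟩, rfl⟩, hxN w⟩
        · exact Or.inr ⟨N w, ⟨w, ⟨hw, h⟩, rfl⟩, hxN w⟩
      · apply union_subset
        · rintro w ⟨T, ⟨x, ⟨hxK, _⟩, rfl⟩, hwT⟩
          exact hNsub K hKirr.1 x hxK hwT
        · rintro w ⟨T, ⟨x, ⟨hxK, _⟩, rfl⟩, hwT⟩
          exact hNsub K hKirr.1 x hxK hwT
    rcases hKirr.2 A hAfix B hBfix hKAB with h | h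
    · exfalso
      have : z ∈ A := h ▸ hzK
      obtain ⟨T, ⟨x, ⟨_, hxX⟩, rfl⟩, hzT⟩ := this
      exact hzX (hNsub X hX x hxX hzT)
    · rw [h]
      rintro w ⟨T, ⟨x, ⟨_, hxY⟩, rfl⟩, hwT⟩
      exact hNsub Y hY x hxY hwT
end

section
/- Let C be a covering of a finite nonempty set U such that the family of irreducible elements of C (which equals the reduction reduct(C) of C) is a partition of U. Then for every X ∈ F the complement Xᶜ = U \ X also belongs to F; consequently (F, ⊆) is a Boolean lattice (a complemented distributive bounded lattice with least element ∅ and greatest element U). -/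
open Set

variable {U : Type*}

lemma exists_irred [Fintype U] (C : Set (Set U)) :
    ∀ n (K : Set U), K ∈ C → K.ncard ≤ n → ∀ x ∈ K,
      ∃ B, (B ∈ C ∧ ¬ covReducible C B) ∧ x ∈ B ∧ B ⊆ K := by
  intro n
  induction n with
  | zero =>
    intro K hK hc x hx
    have : K.ncard ≠ 0 := by
      simp [Set.ncard_eq_zero (Set.toFinite K)]
      rintro rfl; exact hx
    omega
  | succ n ih =>
    intro K hK hc x hx
    by_cases hirr : covReducible C K
    · obtain ⟨S, hS, rfl⟩ := hirr
      obtain ⟨K', hK'S, hxK'⟩ := hx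
      have hK'sub : K' ⊆ ⋃₀ S := Set.subset_sUnion_of_mem hK'S
      have hne : K' ≠ ⋃₀ S := (hS hK'S).2
      have hss : K' ⊂ ⋃₀ S := ⟨hK'sub, fun h => hne (le_antisymm hK'sub h)⟩
      have hcard : K'.ncard < (⋃₀ S).ncard :=
        Set.ncard_lt_ncard hss (Set.toFinite _)
      obtain ⟨B, hB, hxB, hBK⟩ := ih K' (hS hK'S).1 (by omega) x hxK'
      exact ⟨B, hB, hxB, hBK.trans hK'sub⟩
    · exact ⟨K, ⟨hK, hirr⟩, hx, subset_rfl⟩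

lemma mem_fFix_of (C : Set (Set U)) (X : Set U)
    (h : ∀ x ∈ X, ∃ B ∈ C, x ∈ B ∧ B ⊆ X) : X ∈ fFix C := by
  refine subset_antisymm (fL_subset C X) ?_
  intro x hx
  obtain ⟨B, hB, hxB, hBX⟩ := h x hx
  exact ⟨B, ⟨hB, hBX⟩, hxB⟩

lemma block_of_mem [Fintype U] (C : Set (Set U)) (X : Set U) (hX : X ∈ fFix C)
    {x : U} (hx : x ∈ X) :
    ∃ B, (B ∈ C ∧ ¬ covReducible C B) ∧ x ∈ B ∧ B ⊆ X := by
  have hx' : x ∈ fL C X := (show fL C X = X from hX).ge hx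
  obtain ⟨K, ⟨hKC, hKX⟩, hxK⟩ := hx'
  obtain ⟨B, hB, hxB, hBK⟩ := exists_irred C K.ncard K hKC le_rfl x hxK
  exact ⟨B, hB, hxB, hBK.trans hKX⟩

/-- if the family of irreducible elements of `C` (that is,
`reduct(C)`) is a partition of `U`, then `F` is closed under complements;
together with `∅, U ∈ F` and the closure of `F` under `∪` and `∩`, this makes
`(F, ⊆)` a Boolean lattice. -/
theorem stmt18 [Fintype U] [Nonempty U] (C : Set (Set U))
    (hne : ∀ K ∈ C, K.Nonempty) (hcov : ⋃₀ C = Set.univ)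
    (hcovirr : ⋃₀ {K | K ∈ C ∧ ¬ covReducible C K} = Set.univ)
    (hdisj : ∀ K₁ ∈ {K | K ∈ C ∧ ¬ covReducible C K},
      ∀ K₂ ∈ {K | K ∈ C ∧ ¬ covReducible C K}, K₁ ≠ K₂ → K₁ ∩ K₂ = ∅) :
    (∀ X ∈ fFix C, Xᶜ ∈ fFix C) ∧
    (∅ : Set U) ∈ fFix C ∧ (Set.univ : Set U) ∈ fFix C ∧
    ∀ X ∈ fFix C, ∀ Y ∈ fFix C, X ∪ Y ∈ fFix C ∧ X ∩ Y ∈ fFix C := by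
  have hblk : ∀ B₁ B₂ : Set U, (B₁ ∈ C ∧ ¬ covReducible C B₁) →
      (B₂ ∈ C ∧ ¬ covReducible C B₂) → ∀ y, y ∈ B₁ → y ∈ B₂ → B₁ = B₂ := by
    intro B₁ B₂ h1 h2 y hy1 hy2
    by_contra hne
    have := hdisj B₁ h1 B₂ h2 hne
    exact absurd (Set.mem_inter hy1 hy2) (by simp [this])
  refine ⟨?_, ?_, ?_, ?_⟩
  · intro X hX
    refine mem_fFix_of C _ (fun x hx => ?_)
    have : x ∈ ⋃₀ {K | K ∈ C ∧ ¬ covReducible C K} := by rw [hcovirr]; trivial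
    obtain ⟨B, hB, hxB⟩ := this
    refine ⟨B, hB.1, hxB, fun y hy => ?_⟩
    intro hyX
    obtain ⟨B', hB', hyB', hB'X⟩ := block_of_mem C X hX hyX
    have : B = B' := hblk B B' hB hB' y hy hyB'
    exact hx (hB'X (this ▸ hxB))
  · refine subset_antisymm (fL_subset C _) (by simp)
  · refine mem_fFix_of C _ (fun x _ => ?_)
    have : x ∈ ⋃₀ C := by rw [hcov]; trivial
    obtain ⟨K, hK, hxK⟩ := this
    exact ⟨K, hK, hxK, Set.subset_univ K⟩
  · intro X hX Y hY
    constructor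
    · refine mem_fFix_of C _ (fun x hx => ?_)
      rcases hx with hx | hx
      · obtain ⟨B, hB, hxB, hBX⟩ := block_of_mem C X hX hx
        exact ⟨B, hB.1, hxB, hBX.trans Set.subset_union_left⟩
      · obtain ⟨B, hB, hxB, hBY⟩ := block_of_mem C Y hY hx
        exact ⟨B, hB.1, hxB, hBY.trans Set.subset_union_right⟩
    · refine mem_fFix_of C _ (fun x hx => ?_)
      obtain ⟨B, hB, hxB, hBX⟩ := block_of_mem C X hX hx.1
      obtain ⟨B', hB', hxB', hB'Y⟩ := block_of_mem C Y hY hx.2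
      have : B = B' := hblk B B' hB hB' x hxB hxB'
      exact ⟨B, hB.1, hxB, Set.subset_inter hBX (this ▸ hB'Y)⟩
end
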